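/- Let F : ℝ → ℝ be continuous with F(x+1)=F(x)+1 for all x. Then for every x ∈ ℝ, ρ(F_ℓ) ≤ liminf_{n→∞}(Fⁿ(x)-x)/n and limsup_{n→∞}(Fⁿ(x)-x)/n ≤ ρ(F_u), where F_ℓ(x) = inf{F(y) : y ≥ x}, F_u(x) = sup{F(y) : y ≤ x}, and ρ denotes the rotation number of a nondecreasing degree one lifting. -/

import Mathlib

open Filter Set Function

private lemma deg_int' {F : ℝ → ℝ} (hdeg : ∀ x : ℝ, F (x + 1) = F x + 1)
    (x : ℝ) (n : ℤ) : F (x + n) = F x + n := by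
  induction n using Int.induction_on with
  | zero => simp
  | succ k ih =>
      have : F (x + k + 1) = F (x + k) + 1 := hdeg _
      push_cast
      push_cast at ih
      rw [← add_assoc, this, ih]; ring
  | pred k ih =>
      push_cast at ih ⊢
      have h1 : F (x + (-(k:ℝ) - 1) + 1) = F (x + (-(k:ℝ) - 1)) + 1 := hdeg _
      have e : x + (-(k:ℝ) - 1) + 1 = x + -(k:ℝ) := by ring
      rw [e] at h1
      linarith

private lemma bddBelow_img {F : ℝ → ℝ} (hF : Continuous F)
    (hdeg : ∀ x : ℝ, F (x + 1) = F x + 1) (t : ℝ) : BddBelow (F '' Ici t) := by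
  obtain ⟨m, hm, hmin⟩ := (isCompact_Icc (a := t) (b := t + 1)).exists_isMinOn
    ⟨t, by constructor <;> linarith⟩ hF.continuousOn
  refine ⟨F m, ?_⟩
  rintro _ ⟨y, hy, rfl⟩
  have hy' : t ≤ y := hy
  set c : ℤ := ⌊y - t⌋ with hc
  have hc0 : (0:ℤ) ≤ c := Int.le_floor.2 (by simpa using sub_nonneg.2 hy')
  have hfl := Int.floor_le (y - t)
  have hfl2 := Int.lt_floor_add_one (y - t)
  have hmem : y - c ∈ Icc t (t + 1) := ⟨by simp only [hc]; linarith, by simp only [hc]; linarith⟩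
  have heq : F y = F (y - c) + c := by
    have := deg_int' hdeg (y - c) c
    simpa using this
  have hcc : (0:ℝ) ≤ (c:ℝ) := by exact_mod_cast hc0
  have h2 : F m ≤ F (y - c) := hmin hmem
  linarith

private lemma bddAbove_img {F : ℝ → ℝ} (hF : Continuous F)
    (hdeg : ∀ x : ℝ, F (x + 1) = F x + 1) (t : ℝ) : BddAbove (F '' Iic t) := by
  obtain ⟨m, hm, hmax⟩ := (isCompact_Icc (a := t - 1) (b := t)).exists_isMaxOn
    ⟨t, by constructor <;> linarith⟩ hF.continuousOn
  refine ⟨F m, ?_⟩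
  rintro _ ⟨y, hy, rfl⟩
  have hy' : y ≤ t := hy
  set c : ℤ := ⌊t - y⌋ with hc
  have hc0 : (0:ℤ) ≤ c := Int.le_floor.2 (by simpa using sub_nonneg.2 hy')
  have hfl := Int.floor_le (t - y)
  have hfl2 := Int.lt_floor_add_one (t - y)
  have hmem : y + c ∈ Icc (t - 1) t := ⟨by simp only [hc]; linarith, by simp only [hc]; linarith⟩
  have heq : F (y + c) = F y + c := deg_int' hdeg y c
  have hcc : (0:ℝ) ≤ (c:ℝ) := by exact_mod_cast hc0
  have h2 : F (y + c) ≤ F m := hmax hmem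
  linarith

theorem stmt19 (F : ℝ → ℝ) (hF : Continuous F)
    (hdeg : ∀ x : ℝ, F (x + 1) = F x + 1) (rl ru : ℝ)
    (hrl : Filter.Tendsto
      (fun n : ℕ => (fun t : ℝ => sInf (F '' Set.Ici t))^[n] 0 / n)
      Filter.atTop (nhds rl))
    (hru : Filter.Tendsto
      (fun n : ℕ => (fun t : ℝ => sSup (F '' Set.Iic t))^[n] 0 / n)
      Filter.atTop (nhds ru))
    (x : ℝ) :
    rl ≤ Filter.liminf (fun n : ℕ => (F^[n] x - x) / n) Filter.atTop ∧
    Filter.limsup (fun n : ℕ => (F^[n] x - x) / n) Filter.atTop ≤ ru := by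
  have hne : ∀ t : ℝ, (F '' Ici t).Nonempty := fun t => ⟨F t, t, le_refl t, rfl⟩
  have hne' : ∀ t : ℝ, (F '' Iic t).Nonempty := fun t => ⟨F t, t, le_refl t, rfl⟩
  -- lower map as CircleDeg1Lift
  have hmonol : Monotone (fun t : ℝ => sInf (F '' Ici t)) := by
    intro a b hab
    exact csInf_le_csInf (bddBelow_img hF hdeg a) (hne b)
      (image_mono (Ici_subset_Ici.2 hab))
  have hmapl : ∀ t : ℝ, sInf (F '' Ici (t + 1)) = sInf (F '' Ici t) + 1 := by
    intro t
    have himg : F '' Ici (t + 1) = (fun y : ℝ => y + 1) '' (F '' Ici t) := by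
      ext z
      simp only [mem_image, exists_exists_and_eq_and]
      constructor
      · rintro ⟨y, hy, rfl⟩
        refine ⟨y - 1, by simp only [mem_Ici] at hy ⊢; linarith, ?_⟩
        have := hdeg (y - 1); rw [sub_add_cancel] at this; rw [this]
      · rintro ⟨y, hy, rfl⟩
        exact ⟨y + 1, by simp only [mem_Ici] at hy ⊢; linarith, hdeg y⟩
    rw [himg]
    have h := (OrderIso.addRight (1:ℝ)).map_csInf' (hne t) (bddBelow_img hF hdeg t)
    have hc : ⇑(OrderIso.addRight (1:ℝ)) = fun y : ℝ => y + 1 := rfl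
    rw [hc] at h
    exact h.symm
  let fl : CircleDeg1Lift := ⟨⟨fun t : ℝ => sInf (F '' Ici t), hmonol⟩, hmapl⟩
  -- upper map
  have hmonou : Monotone (fun t : ℝ => sSup (F '' Iic t)) := by
    intro a b hab
    exact csSup_le_csSup (bddAbove_img hF hdeg b) (hne' a)
      (image_mono (Iic_subset_Iic.2 hab))
  have hmapu : ∀ t : ℝ, sSup (F '' Iic (t + 1)) = sSup (F '' Iic t) + 1 := by
    intro t
    have himg : F '' Iic (t + 1) = (fun y : ℝ => y + 1) '' (F '' Iic t) := by
      ext z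
      simp only [mem_image, exists_exists_and_eq_and]
      constructor
      · rintro ⟨y, hy, rfl⟩
        refine ⟨y - 1, by simp only [mem_Iic] at hy ⊢; linarith, ?_⟩
        have := hdeg (y - 1); rw [sub_add_cancel] at this; rw [this]
      · rintro ⟨y, hy, rfl⟩
        exact ⟨y + 1, by simp only [mem_Iic] at hy ⊢; linarith, hdeg y⟩
    rw [himg]
    have h := (OrderIso.addRight (1:ℝ)).map_csSup' (hne' t) (bddAbove_img hF hdeg t)
    have hc : ⇑(OrderIso.addRight (1:ℝ)) = fun y : ℝ => y + 1 := rfl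
    rw [hc] at h
    exact h.symm
  let fu : CircleDeg1Lift := ⟨⟨fun t : ℝ => sSup (F '' Iic t), hmonou⟩, hmapu⟩
  -- identify rl, ru with translation numbers
  have hflcoe : ⇑fl = fun t : ℝ => sInf (F '' Ici t) := rfl
  have hfucoe : ⇑fu = fun t : ℝ => sSup (F '' Iic t) := rfl
  have hrl' : rl = fl.translationNumber := by
    refine tendsto_nhds_unique ?_ fl.tendsto_translation_number₀
    refine hrl.congr fun n => ?_
    congr 1
    rw [CircleDeg1Lift.coe_pow, hflcoe]
  have hru' : ru = fu.translationNumber := by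
    refine tendsto_nhds_unique ?_ fu.tendsto_translation_number₀
    refine hru.congr fun n => ?_
    congr 1
    rw [CircleDeg1Lift.coe_pow, hfucoe]
  -- comparison of iterates
  have hflF : ∀ t : ℝ, fl t ≤ F t := fun t =>
    csInf_le (bddBelow_img hF hdeg t) ⟨t, le_refl t, rfl⟩
  have hFfu : ∀ t : ℝ, F t ≤ fu t := fun t =>
    le_csSup (bddAbove_img hF hdeg t) ⟨t, le_refl t, rfl⟩
  have hiterl : ∀ n : ℕ, fl^[n] x ≤ F^[n] x := by
    intro n
    induction n with
    | zero => simp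
    | succ n ih =>
        rw [Function.iterate_succ_apply', Function.iterate_succ_apply']
        exact le_trans (fl.monotone ih) (hflF _)
  have hiteru : ∀ n : ℕ, F^[n] x ≤ fu^[n] x := by
    intro n
    induction n with
    | zero => simp
    | succ n ih =>
        rw [Function.iterate_succ_apply', Function.iterate_succ_apply']
        exact le_trans (hFfu _) (fu.monotone ih)
  have htl : Tendsto (fun n : ℕ => (fl^[n] x - x) / n) atTop (nhds rl) := by
    rw [hrl']
    refine (fl.tendsto_translationNumber x).congr fun n => ?_
    rw [CircleDeg1Lift.coe_pow]
  have htu : Tendsto (fun n : ℕ => (fu^[n] x - x) / n) atTop (nhds ru) := by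
    rw [hru']
    refine (fu.tendsto_translationNumber x).congr fun n => ?_
    rw [CircleDeg1Lift.coe_pow]
  have hle1 : ∀ n : ℕ, (fl^[n] x - x) / n ≤ (F^[n] x - x) / n := by
    intro n
    rcases Nat.eq_zero_or_pos n with h | h
    · simp [h]
    · have hn : (0:ℝ) < n := by exact_mod_cast h
      gcongr
      exact hiterl n
  have hle2 : ∀ n : ℕ, (F^[n] x - x) / n ≤ (fu^[n] x - x) / n := by
    intro n
    rcases Nat.eq_zero_or_pos n with h | h
    · simp [h]
    · have hn : (0:ℝ) < n := by exact_mod_cast h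
      gcongr
      exact hiteru n
  have hevu : ∀ᶠ n : ℕ in atTop, (F^[n] x - x) / n ≤ ru + 1 := by
    filter_upwards [htu.eventually (eventually_le_nhds (show ru < ru + 1 by linarith))] with n hn
    exact (hle2 n).trans hn
  have hevl : ∀ᶠ n : ℕ in atTop, rl - 1 ≤ (F^[n] x - x) / n := by
    filter_upwards [htl.eventually (eventually_ge_nhds (show rl - 1 < rl by linarith))] with n hn
    exact hn.trans (hle1 n)
  constructor
  · calc rl = liminf (fun n : ℕ => (fl^[n] x - x) / n) atTop := htl.liminf_eq.symm
      _ ≤ liminf (fun n : ℕ => (F^[n] x - x) / n) atTop :=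
        liminf_le_liminf (Eventually.of_forall hle1) htl.isBoundedUnder_ge
          (isCoboundedUnder_ge_of_eventually_le _ hevu)
  · calc limsup (fun n : ℕ => (F^[n] x - x) / n) atTop
        ≤ limsup (fun n : ℕ => (fu^[n] x - x) / n) atTop :=
          limsup_le_limsup (Eventually.of_forall hle2)
            (isCoboundedUnder_le_of_eventually_le _ hevl) htu.isBoundedUnder_le
      _ = ru := htu.limsup_eq
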